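/- In the free product F = (ℤ/3ℤ) ∗ (ℤ/2ℤ), let a be the image of a generator of ℤ/3ℤ and b the image of the generator of ℤ/2ℤ. Then the element a²bab is not a proper power: there is no g ∈ F and no integer n ≥ 2 with gⁿ = a²bab. -/

import Mathlib

/-! Auxiliary: PSL(2,ℤ) and trace machinery. -/

abbrev SL2' : Type := Matrix.SpecialLinearGroup (Fin 2) ℤ

def pm1 : Subgroup SL2' := Subgroup.zpowers (-1)

instance pm1_normal : pm1.Normal := by
  constructor
  intro x hx g
  obtain ⟨k, rfl⟩ := Subgroup.mem_zpowers_iff.mp hx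
  have hc : Commute g ((-1 : SL2') ^ k) := by
    have : Commute g (-1 : SL2') := by unfold Commute SemiconjBy; simp
    exact this.zpow_right k
  refine Subgroup.mem_zpowers_iff.mpr ⟨k, ?_⟩
  rw [hc.eq, mul_assoc, mul_inv_cancel, mul_one]

abbrev PSL2' : Type := SL2' ⧸ pm1

def zmodHom (n : ℕ) {G : Type*} [Group G] (x : G) (hx : x ^ n = 1) :
    Multiplicative (ZMod n) →* G :=
  AddMonoidHom.toMultiplicativeLeft
    (ZMod.lift n ⟨zmultiplesHom (Additive G) (Additive.ofMul x), by
      simp only [zmultiplesHom_apply, natCast_zsmul, ← ofMul_pow, hx, ofMul_one]⟩)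

lemma zmodHom_apply (n : ℕ) {G : Type*} [Group G] (x : G) (hx : x ^ n = 1) (m : ℤ) :
    zmodHom n x hx (Multiplicative.ofAdd ((m : ℤ) : ZMod n)) = x ^ m := by
  show Additive.toMul (ZMod.lift n _ (Multiplicative.toAdd (Multiplicative.ofAdd ((m : ℤ) : ZMod n)))) = x ^ m
  simp

lemma sq_eq_CH (m : Matrix (Fin 2) (Fin 2) ℤ) :
    m * m = m.trace • m - m.det • (1 : Matrix (Fin 2) (Fin 2) ℤ) := by
  ext i j
  fin_cases i <;> fin_cases j <;>
    · simp only [Matrix.mul_apply, Fin.sum_univ_succ, Fin.sum_univ_zero, Matrix.sub_apply,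
        Matrix.smul_apply, smul_eq_mul, Matrix.trace_fin_two, Matrix.det_fin_two,
        Matrix.one_apply, add_zero]
      norm_num
      ring

lemma trace_pow_rec (m : Matrix (Fin 2) (Fin 2) ℤ) (hdet : m.det = 1) (n : ℕ) :
    (m ^ (n + 2)).trace = m.trace * (m ^ (n + 1)).trace - (m ^ n).trace := by
  have h2 : m ^ (n + 2) = m ^ n * (m.trace • m - (1 : Matrix (Fin 2) (Fin 2) ℤ)) := by
    rw [pow_add, pow_two, sq_eq_CH, hdet, one_smul]
  rw [h2, Matrix.mul_sub, Matrix.trace_sub, Matrix.mul_smul, Matrix.trace_smul,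
    mul_one, ← pow_succ, smul_eq_mul]

lemma rec_invariant (t : ℤ) (s : ℕ → ℤ) (h0 : s 0 = 2) (h1 : s 1 = t)
    (hrec : ∀ n, s (n + 2) = t * s (n + 1) - s n) (n : ℕ) :
    s n ^ 2 - t * s n * s (n + 1) + s (n + 1) ^ 2 = 4 - t ^ 2 := by
  induction n with
  | zero => rw [h0, h1]; ring
  | succ k ih => rw [hrec k]; linear_combination ih

set_option linter.unreachableTactic false in
set_option linter.unusedTactic false in
lemma key_lemma (t : ℤ) (s : ℕ → ℤ) (h0 : s 0 = 2) (h1 : s 1 = t)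
    (hrec : ∀ n, s (n + 2) = t * s (n + 1) - s n) (n : ℕ) (hn : 2 ≤ n) :
    s n ≠ 3 ∧ s n ≠ -3 := by
  rcases le_or_gt (t ^ 2) 4 with ht | ht
  · rcases eq_or_ne (t ^ 2) 4 with ht4 | ht4
    · have habs : ∀ m, s m = 2 ∨ s m = -2 := by
        intro m
        induction m with
        | zero => left; exact h0
        | succ k ih =>
          have inv := rec_invariant t s h0 h1 hrec k
          rw [ht4] at inv
          have h2 : t = 2 ∨ t = -2 := by
            have : (t - 2) * (t + 2) = 0 := by linear_combination ht4
            rcases mul_eq_zero.mp this with h | h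
            · left; linarith
            · right; linarith
          rcases h2 with rfl | rfl <;> rcases ih with h | h <;>
            · rw [h] at inv
              first
              | (left; nlinarith [sq_nonneg (s (k+1) - 2), sq_nonneg (s (k+1) + 2)])
              | (right; nlinarith [sq_nonneg (s (k+1) - 2), sq_nonneg (s (k+1) + 2)])
      rcases habs n with h | h <;> rw [h] <;> omega
    · have htb : -2 ≤ t ∧ t ≤ 2 := by
        constructor <;> nlinarith [sq_nonneg (t - 2), sq_nonneg (t + 2)]
      have ht1 : t ^ 2 ≤ 1 := by
        obtain ⟨hl, hr⟩ := htb
        interval_cases t <;> simp_all <;> norm_num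
      have inv := rec_invariant t s h0 h1 hrec n
      constructor <;> intro h <;> rw [h] at inv <;>
        nlinarith [sq_nonneg (s (n+1)), sq_nonneg (2 * s (n+1) - 3 * t),
          sq_nonneg (2 * s (n+1) + 3 * t), sq_nonneg t]
  · have ht3 : 3 ≤ |t| := by nlinarith [sq_abs t, abs_nonneg t]
    have grow : ∀ m, |s m| + 1 ≤ |s (m + 1)| ∧ (m : ℤ) + 2 ≤ |s m| := by
      intro m
      induction m with
      | zero =>
        rw [h0, h1]
        exact ⟨by simpa using ht3, by norm_num⟩
      | succ k ih =>
        obtain ⟨ih1, ih2⟩ := ih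
        have hk1 : (k : ℤ) + 3 ≤ |s (k + 1)| := by omega
        refine ⟨?_, by push_cast; omega⟩
        have habs : |t| * |s (k + 1)| - |s k| ≤ |s (k + 2)| := by
          rw [hrec k, ← abs_mul]
          have := abs_sub_abs_le_abs_sub (t * s (k + 1)) (s k)
          omega
        nlinarith [abs_nonneg (s (k + 1)), abs_nonneg (s k)]
    have := (grow n).2
    constructor <;> intro h <;> rw [h] at this <;> simp at this <;> omega

def Amat : SL2' := ⟨!![0,-1;1,-1], by norm_num [Matrix.det_fin_two_of]⟩
def Bmat : SL2' := ⟨!![0,-1;1,0], by norm_num [Matrix.det_fin_two_of]⟩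

lemma Amat_pow3 : Amat ^ 3 = 1 := by
  ext i j
  rw [Matrix.SpecialLinearGroup.coe_pow]
  fin_cases i <;> fin_cases j <;>
    simp [Amat, pow_succ, Matrix.mul_apply, Fin.sum_univ_succ]

lemma Bmat_sq : Bmat ^ 2 = -1 := by
  ext i j
  rw [Matrix.SpecialLinearGroup.coe_pow]
  fin_cases i <;> fin_cases j <;>
    simp [Bmat, pow_succ, Matrix.mul_apply, Fin.sum_univ_succ]

noncomputable def Abar : PSL2' := QuotientGroup.mk Amat
noncomputable def Bbar : PSL2' := QuotientGroup.mk Bmat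

lemma Abar_pow3 : Abar ^ 3 = 1 := by
  rw [Abar, ← QuotientGroup.mk_pow, Amat_pow3]; rfl

lemma Bbar_sq : Bbar ^ 2 = 1 := by
  rw [Bbar, ← QuotientGroup.mk_pow, Bmat_sq]
  rw [QuotientGroup.eq_one_iff]
  exact Subgroup.mem_zpowers_iff.mpr ⟨1, by simp⟩

/-- The free product `(ℤ/3ℤ) ∗ (ℤ/2ℤ)`. -/
abbrev Z3starZ2 : Type :=
  Monoid.Coprod (Multiplicative (ZMod 3)) (Multiplicative (ZMod 2))

noncomputable def phi : Z3starZ2 →* PSL2' :=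
  Monoid.Coprod.lift (zmodHom 3 Abar Abar_pow3) (zmodHom 2 Bbar Bbar_sq)

/-- In `F = (ℤ/3ℤ) ∗ (ℤ/2ℤ)`, with `a` the image of a generator of `ℤ/3ℤ` and `b` the
image of the generator of `ℤ/2ℤ`, the element `a²bab` is not a proper power: there is
no `g ∈ F` and no integer `n ≥ 2` with `gⁿ = a²bab`. -/
theorem a_sq_b_a_b_not_proper_power
    (a₀ : Multiplicative (ZMod 3)) (ha₀ : Subgroup.zpowers a₀ = ⊤) :
    ¬ ∃ (g : Z3starZ2) (n : ℤ), 2 ≤ n ∧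
      g ^ n = (Monoid.Coprod.inl a₀) ^ 2 *
        Monoid.Coprod.inr (Multiplicative.ofAdd (1 : ZMod 2)) *
        Monoid.Coprod.inl a₀ *
        Monoid.Coprod.inr (Multiplicative.ofAdd (1 : ZMod 2)) := by
  rintro ⟨g, n, hn, hg⟩
  -- a₀ is ofAdd 1 or ofAdd 2
  have ha : a₀ = Multiplicative.ofAdd (((1 : ℤ) : ZMod 3)) ∨
      a₀ = Multiplicative.ofAdd (((2 : ℤ) : ZMod 3)) := by
    have h3 : ∀ z : Multiplicative (ZMod 3),
        z = Multiplicative.ofAdd ((0 : ℤ) : ZMod 3) ∨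
        z = Multiplicative.ofAdd ((1 : ℤ) : ZMod 3) ∨
        z = Multiplicative.ofAdd ((2 : ℤ) : ZMod 3) := by decide
    rcases h3 a₀ with h | h | h
    · exfalso
      have h1 : a₀ = 1 := by rw [h]; rfl
      rw [h1, Subgroup.zpowers_one_eq_bot] at ha₀
      have : (Multiplicative.ofAdd ((1 : ℤ) : ZMod 3)) ∈ (⊥ : Subgroup (Multiplicative (ZMod 3))) := by
        rw [ha₀]; trivial
      rw [Subgroup.mem_bot] at this
      exact absurd this (by decide)
    · exact Or.inl h
    · exact Or.inr h
  -- push through phi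
  have hφ := congrArg phi hg
  rw [map_zpow, map_mul, map_mul, map_mul, map_pow] at hφ
  have hBval : phi (Monoid.Coprod.inr (Multiplicative.ofAdd (1 : ZMod 2))) = Bbar := by
    have : (1 : ZMod 2) = ((1 : ℤ) : ZMod 2) := by norm_num
    rw [this]
    simp only [phi, Monoid.Coprod.lift_apply_inr]
    rw [zmodHom_apply]
    exact zpow_one _
  -- obtain matrix rep of phi g
  obtain ⟨M, hM⟩ := QuotientGroup.mk'_surjective pm1 (phi g)
  -- in both cases, phi of RHS is mk of a matrix W with trace -3
  have main : ∀ W : SL2', (W.val).trace = -3 →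
      (QuotientGroup.mk M : PSL2') ^ n = QuotientGroup.mk W → False := by
    intro W htrW hMW
    rw [← QuotientGroup.mk_zpow] at hMW
    rw [QuotientGroup.eq] at hMW
    obtain ⟨k, hk⟩ := Subgroup.mem_zpowers_iff.mp hMW
    have hsq : (-1 : SL2') ^ (2 : ℤ) = 1 := by
      rw [show ((2 : ℤ)) = ((2 : ℕ) : ℤ) from rfl, zpow_natCast, neg_one_sq]
    have hW : M ^ n * ((M ^ n)⁻¹ * W) = W := mul_inv_cancel_left _ _
    rw [← hk] at hW
    have hMn : M ^ n = W ∨ M ^ n = -W := by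
      rcases Int.even_or_odd k with he | ho
      · left
        obtain ⟨m, rfl⟩ := he
        have h1 : (-1 : SL2') ^ (m + m) = 1 := by
          rw [← two_mul, zpow_mul, hsq, one_zpow]
        rw [h1, mul_one] at hW
        exact hW
      · right
        obtain ⟨m, rfl⟩ := ho
        have h1 : (-1 : SL2') ^ (2 * m + 1) = -1 := by
          rw [zpow_add, zpow_mul, hsq, one_zpow, one_mul, zpow_one]
        rw [h1] at hW
        rw [← hW]
        simp
    -- set up trace sequence
    set t : ℤ := (M.val).trace with ht
    set s : ℕ → ℤ := fun m => ((M.val) ^ m).trace with hs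
    have h0 : s 0 = 2 := by simp [hs, Matrix.trace_one]
    have h1 : s 1 = t := by simp [hs, ht]
    have hrec : ∀ m, s (m + 2) = t * s (m + 1) - s m := by
      intro m; exact trace_pow_rec M.val M.2 m
    set N : ℕ := n.toNat with hN
    have hN2 : 2 ≤ N := by omega
    have hNn : (N : ℤ) = n := by omega
    have hkey := key_lemma t s h0 h1 hrec N hN2
    have hMN : M ^ n = M ^ N := by rw [← hNn, zpow_natCast]
    have hsN : s N = ((M ^ N).val).trace := by
      simp [hs, Matrix.SpecialLinearGroup.coe_pow]
    rcases hMn with h | h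
    · rw [hMN] at h
      rw [h] at hsN
      rw [htrW] at hsN
      exact hkey.2 hsN
    · rw [hMN] at h
      rw [h] at hsN
      have : ((-W : SL2').val).trace = 3 := by
        have : ((-W : SL2').val) = -(W.val) := rfl
        rw [this, Matrix.trace_neg, htrW]; ring
      rw [this] at hsN
      exact hkey.1 hsN
  rcases ha with h | h
  · -- a₀ = ofAdd 1 : W = A^2 B A B
    rw [h] at hφ
    have hAval : phi (Monoid.Coprod.inl (Multiplicative.ofAdd ((1 : ℤ) : ZMod 3))) = Abar := by
      simp only [phi, Monoid.Coprod.lift_apply_inl]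
      rw [zmodHom_apply]; exact zpow_one _
    rw [hAval, hBval, ← hM] at hφ
    have hW : Abar ^ 2 * Bbar * Abar * Bbar =
        (QuotientGroup.mk (Amat ^ 2 * Bmat * Amat * Bmat) : PSL2') := by
      simp [Abar, Bbar, QuotientGroup.mk_mul, QuotientGroup.mk_pow]
    rw [hW] at hφ
    refine main _ ?_ hφ
    show ((Amat ^ 2 * Bmat * Amat * Bmat : SL2').val).trace = -3
    simp only [Matrix.SpecialLinearGroup.coe_mul, Matrix.SpecialLinearGroup.coe_pow]
    norm_num [Amat, Bmat, pow_succ, Matrix.mul_fin_two, Matrix.trace_fin_two]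
  · -- a₀ = ofAdd 2 : W = A^4 B A^2 B
    rw [h] at hφ
    have hAval : phi (Monoid.Coprod.inl (Multiplicative.ofAdd ((2 : ℤ) : ZMod 3))) = Abar ^ (2 : ℤ) := by
      simp only [phi, Monoid.Coprod.lift_apply_inl]
      rw [zmodHom_apply]
    rw [hAval, hBval, ← hM] at hφ
    have hW : (Abar ^ (2:ℤ)) ^ 2 * Bbar * Abar ^ (2:ℤ) * Bbar =
        (QuotientGroup.mk (Amat ^ 4 * Bmat * Amat ^ 2 * Bmat) : PSL2') := by
      have h2 : (Abar : PSL2') ^ (2:ℤ) = Abar ^ (2:ℕ) := by rw [show ((2:ℤ)) = ((2:ℕ):ℤ) from rfl, zpow_natCast]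
      rw [h2]
      simp only [← pow_mul]
      simp [Abar, Bbar, QuotientGroup.mk_mul, QuotientGroup.mk_pow]
    rw [hW] at hφ
    refine main _ ?_ hφ
    show ((Amat ^ 4 * Bmat * Amat ^ 2 * Bmat : SL2').val).trace = -3
    simp only [Matrix.SpecialLinearGroup.coe_mul, Matrix.SpecialLinearGroup.coe_pow]
    norm_num [Amat, Bmat, pow_succ, Matrix.mul_fin_two, Matrix.trace_fin_two]
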